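/- Let M be a C¹ symmetric positive-definite matrix field on a compact convex domain Ω with differentiable-metric variation σ1, and let V ⊆ Ω be a finite asymmetric ε-net with respect to D^{LS} (i.e., a (ε,ε)-Delone set: an ε-cover and an asymmetric ε-packing). If σ1·ε ≤ 0.0584, then the Labelle/Shewchuk Voronoi diagram of V (regions taken with respect to D^{LS}) is orphan-free: for every v ∈ V, every connected component of R(v) contains v. -/

import Mathlib

open Matrix Set

attribute [local instance] Matrix.normedAddCommGroup Matrix.normedSpace

/-- The application of a matrix to a vector of Euclidean space. -/
noncomputable def mav {n : ℕ} (A : Matrix (Fin n) (Fin n) ℝ)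
    (x : EuclideanSpace ℝ (Fin n)) : EuclideanSpace ℝ (Fin n) :=
  Matrix.toEuclideanLin A x

/-- The spectral (operator) norm `ρ` of a matrix. -/
noncomputable def rho {n : ℕ} (A : Matrix (Fin n) (Fin n) ℝ) : ℝ :=
  ‖LinearMap.toContinuousLinearMap (Matrix.toEuclideanLin A)‖

/-- The smallest singular value `ρ_m` of an (invertible) matrix: `ρ_m(A) = ρ(A⁻¹)⁻¹`. -/
noncomputable def rhom {n : ℕ} (A : Matrix (Fin n) (Fin n) ℝ) : ℝ :=
  (rho A⁻¹)⁻¹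

/-- The Voronoi region of a site `v ∈ V` inside `Ω`, w.r.t. an asymmetric distance `D`. -/
def vorRegion {n : ℕ} (Ω V : Set (EuclideanSpace ℝ (Fin n)))
    (D : EuclideanSpace ℝ (Fin n) → EuclideanSpace ℝ (Fin n) → ℝ)
    (v : EuclideanSpace ℝ (Fin n)) : Set (EuclideanSpace ℝ (Fin n)) :=
  {p ∈ Ω | ∀ w ∈ V, D p v ≤ D p w}

/-- The set of ratios whose supremum is the worst-case metric variation `σ0`. -/
def sigma0Set {n : ℕ} (Ω : Set (EuclideanSpace ℝ (Fin n)))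
    (M : EuclideanSpace ℝ (Fin n) → Matrix (Fin n) (Fin n) ℝ) : Set ℝ :=
  {x | ∃ a ∈ Ω, ∃ b ∈ Ω, a ≠ b ∧
    x = rho (M b * (M a)⁻¹ - 1) / ‖mav (M a) (a - b)‖}

/-- The set of ratios whose supremum is the differentiable-metric variation `σ1`
(the directional derivative of `M` at `p` in direction `r` is `fderivWithin ℝ M Ω p r`). -/
noncomputable def sigma1Set {n : ℕ} (Ω : Set (EuclideanSpace ℝ (Fin n)))
    (M : EuclideanSpace ℝ (Fin n) → Matrix (Fin n) (Fin n) ℝ) : Set ℝ :=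
  {x | ∃ p ∈ Ω, ∃ r : EuclideanSpace ℝ (Fin n), ‖r‖ = 1 ∧
    x = rho ((fderivWithin ℝ M Ω p r) * (M p)⁻¹) / ‖mav (M p) r‖}

set_option maxHeartbeats 1000000

section Helpers
variable {n : ℕ}

lemma rho_nonneg (A : Matrix (Fin n) (Fin n) ℝ) : 0 ≤ rho A := norm_nonneg _

lemma mav_opnorm (A : Matrix (Fin n) (Fin n) ℝ) (x : EuclideanSpace ℝ (Fin n)) :
    ‖mav A x‖ ≤ rho A * ‖x‖ := by
  have h := (LinearMap.toContinuousLinearMap (Matrix.toEuclideanLin A)).le_opNorm x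
  rw [LinearMap.coe_toContinuousLinearMap'] at h
  exact h

lemma mav_mul (A B : Matrix (Fin n) (Fin n) ℝ) (x : EuclideanSpace ℝ (Fin n)) :
    mav (A * B) x = mav A (mav B x) := by
  simp [mav, Matrix.toEuclideanLin_apply, Matrix.mulVec_mulVec]

lemma mav_one (x : EuclideanSpace ℝ (Fin n)) : mav 1 x = x := by
  simp [mav, Matrix.toEuclideanLin_apply]

lemma mav_sub (A : Matrix (Fin n) (Fin n) ℝ) (x y : EuclideanSpace ℝ (Fin n)) :
    mav A (x - y) = mav A x - mav A y := by simp [mav]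

lemma mav_smul (A : Matrix (Fin n) (Fin n) ℝ) (c : ℝ) (x : EuclideanSpace ℝ (Fin n)) :
    mav A (c • x) = c • mav A x := by simp [mav]

lemma mav_neg (A : Matrix (Fin n) (Fin n) ℝ) (x : EuclideanSpace ℝ (Fin n)) :
    mav A (-x) = - mav A x := by simp [mav]

lemma mav_add (A : Matrix (Fin n) (Fin n) ℝ) (x y : EuclideanSpace ℝ (Fin n)) :
    mav A (x + y) = mav A x + mav A y := by simp [mav]

lemma mav_smul_mat (A : Matrix (Fin n) (Fin n) ℝ) (c : ℝ) (x : EuclideanSpace ℝ (Fin n)) :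
    mav (c • A) x = c • mav A x := by simp [mav]

lemma rho_le_bound {A : Matrix (Fin n) (Fin n) ℝ} {C : ℝ} (hC : 0 ≤ C)
    (h : ∀ x : EuclideanSpace ℝ (Fin n), ‖mav A x‖ ≤ C * ‖x‖) : rho A ≤ C := by
  apply ContinuousLinearMap.opNorm_le_bound _ hC
  intro x
  have := h x
  rwa [show mav A x = LinearMap.toContinuousLinearMap (Matrix.toEuclideanLin A) x by
    rw [LinearMap.coe_toContinuousLinearMap']; rfl] at this

lemma rho_smul_le (c : ℝ) (A : Matrix (Fin n) (Fin n) ℝ) : rho (c • A) ≤ |c| * rho A := by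
  apply rho_le_bound (mul_nonneg (abs_nonneg c) (rho_nonneg A))
  intro x
  rw [mav_smul_mat, norm_smul, Real.norm_eq_abs, mul_assoc]
  exact mul_le_mul_of_nonneg_left (mav_opnorm A x) (abs_nonneg c)

lemma posdef_inv_mul {A : Matrix (Fin n) (Fin n) ℝ} (h : A.PosDef) : A⁻¹ * A = 1 :=
  Matrix.nonsing_inv_mul A (isUnit_iff_ne_zero.2 h.det_pos.ne')

lemma mav_eq_zero {A : Matrix (Fin n) (Fin n) ℝ} (h : A.PosDef)
    {x : EuclideanSpace ℝ (Fin n)} (hx : mav A x = 0) : x = 0 := by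
  have : mav (A⁻¹ * A) x = 0 := by rw [mav_mul, hx]; simp [mav]
  rwa [posdef_inv_mul h, mav_one] at this

lemma mav_norm_pos {A : Matrix (Fin n) (Fin n) ℝ} (h : A.PosDef)
    {x : EuclideanSpace ℝ (Fin n)} (hx : x ≠ 0) : 0 < ‖mav A x‖ := by
  rw [norm_pos_iff]
  exact fun hz => hx (mav_eq_zero h hz)

lemma rho_zero : rho (0 : Matrix (Fin n) (Fin n) ℝ) = 0 := by
  have h1 : rho (0 : Matrix (Fin n) (Fin n) ℝ) ≤ 0 :=
    rho_le_bound le_rfl (fun x => by simp [mav])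
  exact le_antisymm h1 (rho_nonneg _)

lemma sigma_bound {Ω : Set (EuclideanSpace ℝ (Fin n))}
    {M : EuclideanSpace ℝ (Fin n) → Matrix (Fin n) (Fin n) ℝ} {σ1 : ℝ}
    (hub : σ1 ∈ upperBounds (sigma1Set Ω M)) (hσnn : 0 ≤ σ1)
    {p : EuclideanSpace ℝ (Fin n)} (hpd : (M p).PosDef) (hp : p ∈ Ω)
    (r : EuclideanSpace ℝ (Fin n)) :
    rho ((fderivWithin ℝ M Ω p r) * (M p)⁻¹) ≤ σ1 * ‖mav (M p) r‖ := by
  by_cases hr : r = 0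
  · subst hr
    rw [map_zero, zero_mul, rho_zero]
    positivity
  · set c : ℝ := ‖r‖ with hc
    have hcpos : 0 < c := norm_pos_iff.2 hr
    set rr : EuclideanSpace ℝ (Fin n) := c⁻¹ • r with hrr
    have hnorm : ‖rr‖ = 1 := norm_smul_inv_norm hr
    have hrrne : rr ≠ 0 := by
      intro h; rw [h, norm_zero] at hnorm; norm_num at hnorm
    have hmem : rho ((fderivWithin ℝ M Ω p rr) * (M p)⁻¹) / ‖mav (M p) rr‖ ∈ sigma1Set Ω M :=
      ⟨p, hp, rr, hnorm, rfl⟩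
    have hle := hub hmem
    have hdpos : 0 < ‖mav (M p) rr‖ := mav_norm_pos hpd hrrne
    have h1 : rho ((fderivWithin ℝ M Ω p rr) * (M p)⁻¹) ≤ σ1 * ‖mav (M p) rr‖ := by
      rw [div_le_iff₀ hdpos] at hle; linarith [hle]
    have hsm : (fderivWithin ℝ M Ω p) rr = c⁻¹ • (fderivWithin ℝ M Ω p r) := by
      rw [hrr, _root_.map_smul]
    have hsm2 : (fderivWithin ℝ M Ω p rr) * (M p)⁻¹
        = c⁻¹ • ((fderivWithin ℝ M Ω p r) * (M p)⁻¹) := by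
      rw [hsm, smul_mul_assoc]
    have hres : rho ((fderivWithin ℝ M Ω p r) * (M p)⁻¹)
        ≤ c * rho ((fderivWithin ℝ M Ω p rr) * (M p)⁻¹) := by
      rw [hsm2]
      have h3 := rho_smul_le c (c⁻¹ • ((fderivWithin ℝ M Ω p r) * (M p)⁻¹))
      rw [smul_smul, mul_inv_cancel₀ hcpos.ne', one_smul, abs_of_pos hcpos] at h3
      exact h3
    have hmavrr : ‖mav (M p) rr‖ = c⁻¹ * ‖mav (M p) r‖ := by
      rw [hrr, mav_smul, norm_smul, Real.norm_eq_abs, abs_of_pos (inv_pos.2 hcpos)]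
    calc rho ((fderivWithin ℝ M Ω p r) * (M p)⁻¹)
        ≤ c * rho ((fderivWithin ℝ M Ω p rr) * (M p)⁻¹) := hres
      _ ≤ c * (σ1 * ‖mav (M p) rr‖) := by
          exact mul_le_mul_of_nonneg_left h1 hcpos.le
      _ = σ1 * ‖mav (M p) r‖ := by
          rw [hmavrr]; field_simp

noncomputable def matApplyCLM (x : EuclideanSpace ℝ (Fin n)) :
    Matrix (Fin n) (Fin n) ℝ →L[ℝ] EuclideanSpace ℝ (Fin n) :=
  LinearMap.toContinuousLinearMap
    { toFun := fun A => mav A x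
      map_add' := fun A B => by simp [mav, map_add]
      map_smul' := fun c A => by simp [mav] }

lemma matApplyCLM_apply (x : EuclideanSpace ℝ (Fin n)) (A : Matrix (Fin n) (Fin n) ℝ) :
    matApplyCLM x A = mav A x := by
  rw [matApplyCLM, LinearMap.coe_toContinuousLinearMap']; rfl

lemma hasDeriv_mav {Ω : Set (EuclideanSpace ℝ (Fin n))}
    {M : EuclideanSpace ℝ (Fin n) → Matrix (Fin n) (Fin n) ℝ}
    (hMc1 : ContDiffOn ℝ 1 M Ω) (hconv : Convex ℝ Ω)
    {a b : EuclideanSpace ℝ (Fin n)} (ha : a ∈ Ω) (hb : b ∈ Ω)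
    (x : EuclideanSpace ℝ (Fin n)) {t : ℝ} (ht : t ∈ Icc (0:ℝ) 1) :
    HasDerivWithinAt (fun s => mav (M (a + s • (b - a))) x)
      (mav ((fderivWithin ℝ M Ω (a + t • (b - a))) (b - a)) x) (Icc 0 1) t := by
  have hmaps : MapsTo (fun s : ℝ => a + s • (b - a)) (Icc 0 1) Ω := by
    intro s hs
    show a + s • (b - a) ∈ Ω
    have : a + s • (b - a) = (1 - s) • a + s • b := by
      rw [smul_sub, sub_smul, one_smul]; abel
    rw [this]
    exact hconv ha hb (by linarith [hs.2]) hs.1 (by ring)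
  have hγ : HasDerivWithinAt (fun s : ℝ => a + s • (b - a)) (b - a) (Icc 0 1) t := by
    have h1 : HasDerivAt (fun s : ℝ => a + s • (b - a)) ((1:ℝ) • (b - a)) t := by
      exact ((hasDerivAt_id t).smul_const (b - a)).const_add a
    rw [one_smul] at h1
    exact h1.hasDerivWithinAt
  have hM : HasFDerivWithinAt M (fderivWithin ℝ M Ω (a + t • (b - a))) Ω (a + t • (b - a)) :=
    ((hMc1.differentiableOn one_ne_zero) _ (hmaps ht)).hasFDerivWithinAt
  have hcomp := hM.comp_hasDerivWithinAt t hγ hmaps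
  have := (matApplyCLM x).hasFDerivAt.comp_hasDerivWithinAt t hcomp
  simp only [Function.comp] at this ⊢
  exact this

lemma deriv_norm_bound {Ω : Set (EuclideanSpace ℝ (Fin n))}
    {M : EuclideanSpace ℝ (Fin n) → Matrix (Fin n) (Fin n) ℝ} {σ1 : ℝ}
    (hub : σ1 ∈ upperBounds (sigma1Set Ω M)) (hσnn : 0 ≤ σ1)
    {q : EuclideanSpace ℝ (Fin n)} (hpd : (M q).PosDef) (hq : q ∈ Ω)
    (r x : EuclideanSpace ℝ (Fin n)) :
    ‖mav ((fderivWithin ℝ M Ω q) r) x‖ ≤ σ1 * ‖mav (M q) r‖ * ‖mav (M q) x‖ := by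
  have hN : (fderivWithin ℝ M Ω q) r = ((fderivWithin ℝ M Ω q) r * (M q)⁻¹) * (M q) := by
    rw [mul_assoc, posdef_inv_mul hpd, mul_one]
  calc ‖mav ((fderivWithin ℝ M Ω q) r) x‖
      = ‖mav ((fderivWithin ℝ M Ω q) r * (M q)⁻¹) (mav (M q) x)‖ := by
        rw [← mav_mul, ← hN]
    _ ≤ rho ((fderivWithin ℝ M Ω q) r * (M q)⁻¹) * ‖mav (M q) x‖ := mav_opnorm _ _
    _ ≤ σ1 * ‖mav (M q) r‖ * ‖mav (M q) x‖ :=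
        mul_le_mul_of_nonneg_right (sigma_bound hub hσnn hpd hq r) (norm_nonneg _)

lemma gronwall_seg {Ω : Set (EuclideanSpace ℝ (Fin n))}
    {M : EuclideanSpace ℝ (Fin n) → Matrix (Fin n) (Fin n) ℝ} {σ1 : ℝ}
    (hub : σ1 ∈ upperBounds (sigma1Set Ω M)) (hσnn : 0 ≤ σ1)
    (hMc1 : ContDiffOn ℝ 1 M Ω) (hconv : Convex ℝ Ω)
    (hMpd : ∀ p ∈ Ω, (M p).PosDef)
    {a b : EuclideanSpace ℝ (Fin n)} (ha : a ∈ Ω) (hb : b ∈ Ω)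
    (x : EuclideanSpace ℝ (Fin n)) {c : ℝ} (hc : c ∈ Icc (0:ℝ) 1) {K : ℝ}
    (hbound : ∀ s ∈ Ico (0:ℝ) c, σ1 * ‖mav (M (a + s • (b - a))) (b - a)‖ ≤ K) :
    ∀ s ∈ Icc (0:ℝ) c, ‖mav (M (a + s • (b - a))) x‖
      ≤ ‖mav (M a) x‖ * Real.exp (K * s) := by
  have hmem : ∀ s ∈ Icc (0:ℝ) 1, a + s • (b - a) ∈ Ω := by
    intro s hs
    have heq : a + s • (b - a) = (1 - s) • a + s • b := by
      rw [smul_sub, sub_smul, one_smul]; abel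
    rw [heq]
    exact hconv ha hb (by linarith [hs.2]) hs.1 (by ring)
  have hss : Icc (0:ℝ) c ⊆ Icc (0:ℝ) 1 := Icc_subset_Icc le_rfl hc.2
  have hcont : ContinuousOn (fun s => mav (M (a + s • (b - a))) x) (Icc (0:ℝ) c) := by
    intro t ht
    exact ((hasDeriv_mav hMc1 hconv ha hb x (hss ht)).continuousWithinAt).mono hss
  have hderiv : ∀ s ∈ Ico (0:ℝ) c, HasDerivWithinAt (fun s => mav (M (a + s • (b - a))) x)
      (mav ((fderivWithin ℝ M Ω (a + s • (b - a))) (b - a)) x) (Ici s) s := by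
    intro s hs
    have hs1 : s ∈ Icc (0:ℝ) 1 := ⟨hs.1, le_trans hs.2.le hc.2⟩
    have h := hasDeriv_mav hMc1 hconv ha hb x hs1
    apply h.mono_of_mem_nhdsWithin
    rw [mem_nhdsWithin]
    refine ⟨Iio 1, isOpen_Iio, lt_of_lt_of_le hs.2 hc.2, ?_⟩
    rintro y ⟨hy1, hy2⟩
    exact ⟨le_trans hs.1 hy2, le_of_lt hy1⟩
  have hbnd : ∀ s ∈ Ico (0:ℝ) c,
      ‖mav ((fderivWithin ℝ M Ω (a + s • (b - a))) (b - a)) x‖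
        ≤ K * ‖mav (M (a + s • (b - a))) x‖ + 0 := by
    intro s hs
    have hs1 : s ∈ Icc (0:ℝ) 1 := ⟨hs.1, le_trans hs.2.le hc.2⟩
    have h1 := deriv_norm_bound hub hσnn (hMpd _ (hmem s hs1)) (hmem s hs1) (b - a) x
    have h2 := hbound s hs
    have := mul_le_mul_of_nonneg_right h2 (norm_nonneg (mav (M (a + s • (b - a))) x))
    linarith
  have h0 : ‖mav (M (a + (0:ℝ) • (b - a))) x‖ ≤ ‖mav (M a) x‖ := by
    rw [zero_smul, add_zero]
  have := norm_le_gronwallBound_of_norm_deriv_right_le hcont hderiv h0 hbnd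
  intro s hs
  have h := this s hs
  rw [sub_zero, gronwallBound_ε0] at h
  exact h

/-- Lemma A: metric comparison between two points of `Ω`. -/
lemma lemA {Ω : Set (EuclideanSpace ℝ (Fin n))}
    {M : EuclideanSpace ℝ (Fin n) → Matrix (Fin n) (Fin n) ℝ} {σ1 : ℝ}
    (hub : σ1 ∈ upperBounds (sigma1Set Ω M)) (hσnn : 0 ≤ σ1)
    (hMc1 : ContDiffOn ℝ 1 M Ω) (hconv : Convex ℝ Ω)
    (hMpd : ∀ p ∈ Ω, (M p).PosDef)
    {a b : EuclideanSpace ℝ (Fin n)} (ha : a ∈ Ω) (hb : b ∈ Ω)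
    (hsmall : σ1 * ‖mav (M a) (b - a)‖ ≤ 0.15)
    (x : EuclideanSpace ℝ (Fin n)) :
    ‖mav (M b) x‖ ≤ Real.exp (1.25 * (σ1 * ‖mav (M a) (b - a)‖)) * ‖mav (M a) x‖ := by
  set u₀ : ℝ := ‖mav (M a) (b - a)‖ with hu₀
  have hu₀nn : 0 ≤ u₀ := norm_nonneg _
  by_cases hba : b = a
  · subst hba
    have : u₀ = 0 := by rw [hu₀, sub_self]; simp [mav]
    rw [this]
    simp
  · have hbane : b - a ≠ 0 := sub_ne_zero.2 hba
    have hu₀pos : 0 < u₀ := mav_norm_pos (hMpd a ha) hbane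
    set K : ℝ := 1.25 * (σ1 * u₀) with hK
    have hKnn : 0 ≤ K := by positivity
    have hK1875 : K ≤ 0.1875 := by rw [hK]; linarith
    have hexpK : Real.exp K ≤ 1.231 := by
      have h1 : Real.exp (-(0.1875:ℝ)) ≥ 1 - 0.1875 := by
        have := Real.add_one_le_exp (-(0.1875:ℝ)); linarith
      have h2 : Real.exp K ≤ Real.exp 0.1875 := Real.exp_le_exp.2 hK1875
      have h3 : Real.exp (0.1875:ℝ) * Real.exp (-(0.1875:ℝ)) = 1 := by
        rw [← Real.exp_add]; norm_num
      nlinarith [Real.exp_pos (0.1875:ℝ), Real.exp_pos (-(0.1875:ℝ))]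
    set u : ℝ → ℝ := fun s => ‖mav (M (a + s • (b - a))) (b - a)‖ with hu
    -- the bootstrap set
    set S : Set ℝ := {t | t ∈ Icc (0:ℝ) 1 ∧ ∀ τ ∈ Icc (0:ℝ) t, u τ ≤ 1.25 * u₀} with hS
    have hu0 : u 0 = u₀ := by rw [hu]; simp [hu₀]
    have hS0 : (0:ℝ) ∈ S := by
      refine ⟨⟨le_rfl, zero_le_one⟩, ?_⟩
      intro τ hτ
      have : τ = 0 := le_antisymm hτ.2 hτ.1
      rw [this, hu0]; linarith
    have hSne : S.Nonempty := ⟨0, hS0⟩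
    have hSbdd : BddAbove S := ⟨1, fun t ht => ht.1.2⟩
    set c : ℝ := sSup S with hc
    have hc0 : 0 ≤ c := le_csSup hSbdd hS0
    have hc1 : c ≤ 1 := csSup_le hSne (fun t ht => ht.1.2)
    have hlt : ∀ τ, 0 ≤ τ → τ < c → u τ ≤ 1.25 * u₀ := by
      intro τ hτ0 hτc
      obtain ⟨t, htS, hτt⟩ := exists_lt_of_lt_csSup hSne hτc
      exact htS.2 τ ⟨hτ0, hτt.le⟩
    -- Gronwall on [0, c]
    have hgc : ∀ s ∈ Icc (0:ℝ) c, u s ≤ u₀ * Real.exp (K * s) := by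
      have := gronwall_seg hub hσnn hMc1 hconv hMpd ha hb (b - a) ⟨hc0, hc1⟩
        (K := K) ?_
      · intro s hs
        have h := this s hs
        rwa [show ‖mav (M a) (b-a)‖ = u₀ from rfl] at h
      · intro s hs
        have h1 : u s ≤ 1.25 * u₀ := hlt s hs.1 hs.2
        have h2 : σ1 * u s ≤ σ1 * (1.25 * u₀) := mul_le_mul_of_nonneg_left h1 hσnn
        rw [hK]; calc σ1 * ‖mav (M (a + s • (b - a))) (b - a)‖ = σ1 * u s := rfl
          _ ≤ σ1 * (1.25 * u₀) := h2
          _ = 1.25 * (σ1 * u₀) := by ring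
    have hcS_strong : ∀ τ ∈ Icc (0:ℝ) c, u τ < 1.25 * u₀ := by
      intro τ hτ
      have h1 := hgc τ hτ
      have h2 : Real.exp (K * τ) ≤ 1.231 := by
        have : K * τ ≤ K := by nlinarith [hτ.2, hτ.1]
        exact le_trans (Real.exp_le_exp.2 this) hexpK
      nlinarith
    have hceq : c = 1 := by
      by_contra hne
      have hclt : c < 1 := lt_of_le_of_ne hc1 hne
      -- continuity of u at c within Icc 0 1
      have hcmem : c ∈ Icc (0:ℝ) 1 := ⟨hc0, hc1⟩
      have hcont : ContinuousWithinAt u (Icc (0:ℝ) 1) c := by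
        have h' := (hasDeriv_mav hMc1 hconv ha hb (b - a) hcmem).continuousWithinAt
        exact h'.norm
      have hcc : u c < 1.25 * u₀ := hcS_strong c ⟨hc0, le_rfl⟩
      have hev : ∀ᶠ y in nhdsWithin c (Icc (0:ℝ) 1), u y < 1.25 * u₀ :=
        Filter.Tendsto.eventually_lt_const hcc hcont
      rw [Filter.Eventually, Metric.mem_nhdsWithin_iff] at hev
      obtain ⟨δ, hδ, hball⟩ := hev
      set t' : ℝ := min 1 (c + δ / 2) with ht'
      have ht'c : c < t' := by
        rw [ht']; apply lt_min hclt; linarith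
      have ht'1 : t' ≤ 1 := min_le_left _ _
      have ht'S : t' ∈ S := by
        refine ⟨⟨le_trans hc0 ht'c.le, ht'1⟩, ?_⟩
        intro τ hτ
        rcases le_or_gt τ c with h | h
        · exact (hcS_strong τ ⟨hτ.1, h⟩).le
        · have hτ1 : τ ≤ 1 := le_trans hτ.2 ht'1
          have hdist : dist τ c < δ := by
            rw [Real.dist_eq, abs_of_pos (by linarith : 0 < τ - c)]
            have : τ ≤ c + δ / 2 := le_trans hτ.2 (min_le_right _ _)
            linarith
          exact (hball ⟨Metric.mem_ball.2 hdist, hτ.1, hτ1⟩).le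
      have := le_csSup hSbdd ht'S
      linarith
    -- final Gronwall on [0,1]
    have hfin := gronwall_seg hub hσnn hMc1 hconv hMpd ha hb x
      (c := 1) ⟨zero_le_one, le_rfl⟩ (K := K) ?_
    · have h := hfin 1 ⟨zero_le_one, le_rfl⟩
      rw [one_smul, add_sub_cancel] at h
      rw [mul_one] at h
      calc ‖mav (M b) x‖ ≤ ‖mav (M a) x‖ * Real.exp K := h
        _ = Real.exp (1.25 * (σ1 * u₀)) * ‖mav (M a) x‖ := by rw [hK]; ring
    · intro s hs
      have h1 : u s ≤ 1.25 * u₀ := by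
        rw [← hceq] at hs
        exact (hcS_strong s ⟨hs.1, hs.2.le⟩).le
      have h2 : σ1 * u s ≤ σ1 * (1.25 * u₀) := mul_le_mul_of_nonneg_left h1 hσnn
      rw [hK]
      calc σ1 * ‖mav (M (a + s • (b - a))) (b - a)‖ = σ1 * u s := rfl
        _ ≤ σ1 * (1.25 * u₀) := h2
        _ = 1.25 * (σ1 * u₀) := by ring

lemma mav_norm_swap (A : Matrix (Fin n) (Fin n) ℝ) (x y : EuclideanSpace ℝ (Fin n)) :
    ‖mav A (x - y)‖ = ‖mav A (y - x)‖ := by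
  rw [show x - y = -(y - x) by abel, mav_neg, norm_neg]

lemma exp_le_one_div {x : ℝ} (h0 : 0 ≤ x) (h1 : x < 1) : Real.exp x ≤ 1 / (1 - x) := by
  have h2 : 1 - x ≤ Real.exp (-x) := by have := Real.add_one_le_exp (-x); linarith
  have h3 : Real.exp x * Real.exp (-x) = 1 := by rw [← Real.exp_add]; simp
  rw [le_div_iff₀ (by linarith : (0:ℝ) < 1 - x)]
  nlinarith [Real.exp_pos x]

lemma exp_le_one_add {y c : ℝ} (hy0 : 0 ≤ y) (hyc : y ≤ c) (hc : c < 1) :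
    Real.exp y ≤ 1 + y * (1 / (1 - c)) := by
  have h1 : 1 - y ≤ Real.exp (-y) := by have := Real.add_one_le_exp (-y); linarith
  have h2 : Real.exp y * Real.exp (-y) = 1 := by rw [← Real.exp_add]; simp
  have h3 : Real.exp y ≤ Real.exp c := Real.exp_le_exp.2 hyc
  have h4 : Real.exp c ≤ 1 / (1 - c) := exp_le_one_div (le_trans hy0 hyc) hc
  nlinarith [Real.exp_pos y]

lemma endgame {σ1 τ t d ε E1 E2 Dqp β G X Y : ℝ}
    (ht0 : 0 ≤ t) (ht1 : t ≤ 1) (hτ : τ = 1 - t)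
    (hdpos : 0 < d) (hdε : d ≤ ε)
    (hσnn : 0 ≤ σ1) (hsd : σ1 * d ≤ 0.0584)
    (hE1def : E1 = Real.exp (1.25 * (σ1 * (τ * d))))
    (hDqp_nn : 0 ≤ Dqp) (hDqp : Dqp ≤ E1 * (τ * d))
    (hE2def : E2 = Real.exp (1.25 * (σ1 * Dqp)))
    (hG2 : (t * d)^2 + τ * β^2 ≤ G^2)
    (hβε : 0.85 * ε ≤ β) (hβnn : 0 ≤ β) (hGnn : 0 ≤ G)
    (hXle : X ≤ E1 * (t * d)) (hGle : G ≤ E2 * Y) : X ≤ Y := by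
  have hτ0 : 0 ≤ τ := by rw [hτ]; linarith
  have hτ1 : τ ≤ 1 := by rw [hτ]; linarith
  have hεpos : 0 < ε := lt_of_lt_of_le hdpos hdε
  have hE1pos : 0 < E1 := by rw [hE1def]; exact Real.exp_pos _
  have hE2pos : 0 < E2 := by rw [hE2def]; exact Real.exp_pos _
  have hτd_nn : 0 ≤ σ1 * (τ * d) := mul_nonneg hσnn (mul_nonneg hτ0 hdpos.le)
  have hsDqp_nn : 0 ≤ σ1 * Dqp := mul_nonneg hσnn hDqp_nn
  have hE1le : E1 ≤ 1.0788 := by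
    have harg : 1.25 * (σ1 * (τ * d)) ≤ 0.073 := by nlinarith
    have h1 := Real.exp_le_exp.2 harg
    have h2 : Real.exp (0.073:ℝ) ≤ 1 / (1 - 0.073) := exp_le_one_div (by norm_num) (by norm_num)
    have h3 : (1:ℝ) / (1 - 0.073) ≤ 1.0788 := by norm_num
    rw [hE1def]
    linarith
  set z1 : ℝ := 1.25 * (σ1 * (τ * d)) with hz1def
  set z2 : ℝ := 1.25 * (σ1 * Dqp) with hz2def
  have hz1nn : 0 ≤ z1 := by rw [hz1def]; exact mul_nonneg (by norm_num) hτd_nn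
  have hz2nn : 0 ≤ z2 := by rw [hz2def]; exact mul_nonneg (by norm_num) hsDqp_nn
  have hz1le : z1 ≤ 0.073 * τ := by
    have he : z1 = τ * (1.25 * (σ1 * d)) := by rw [hz1def]; ring
    rw [he]
    have h1 : 1.25 * (σ1 * d) ≤ 0.073 := by linarith
    nlinarith
  have hz2le : z2 ≤ 0.0788 * τ := by
    have ha1 : σ1 * Dqp ≤ σ1 * (E1 * (τ * d)) := mul_le_mul_of_nonneg_left hDqp hσnn
    have ha2 : σ1 * (E1 * (τ * d)) = E1 * (τ * (σ1 * d)) := by ring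
    have ha3 : τ * (σ1 * d) ≤ τ * 0.0584 := mul_le_mul_of_nonneg_left hsd hτ0
    have ha4 : 0 ≤ τ * (σ1 * d) := mul_nonneg hτ0 (mul_nonneg hσnn hdpos.le)
    have ha5 : E1 * (τ * (σ1 * d)) ≤ 1.0788 * (τ * 0.0584) :=
      mul_le_mul hE1le ha3 ha4 (by norm_num)
    rw [hz2def]
    nlinarith
  have hzsum : z1 + z2 ≤ 0.152 * τ := by linarith
  have hE12 : E1 * E2 = Real.exp (z1 + z2) := by
    rw [hE1def, hE2def, ← Real.exp_add]
  have hEsq : (E1 * E2)^2 = Real.exp (2 * (z1 + z2)) := by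
    rw [hE12, sq, ← Real.exp_add]
    ring_nf
  have hy0 : 0 ≤ 2 * (z1 + z2) := by linarith
  have hyc : 2 * (z1 + z2) ≤ 0.304 := by linarith
  have hexp2 : Real.exp (2 * (z1 + z2)) ≤ 1 + 0.437 * τ := by
    have h1 := exp_le_one_add hy0 hyc (by norm_num)
    have h2 : (1:ℝ) / (1 - 0.304) ≤ 1.4369 := by norm_num
    have h3 : 2 * (z1 + z2) ≤ 0.304 * τ := by linarith
    nlinarith [Real.exp_pos (2 * (z1 + z2))]
  have hβd : 0.437 * d^2 ≤ β^2 := by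
    have hβ2 : (0.85 * ε)^2 ≤ β^2 := pow_le_pow_left₀ (by nlinarith) hβε 2
    have hd2 : d^2 ≤ ε^2 := pow_le_pow_left₀ hdpos.le hdε 2
    nlinarith
  have hkey : (E1 * E2 * (t * d))^2 ≤ G^2 := by
    have hA : (E1 * E2 * (t * d))^2 = (E1 * E2)^2 * (t * d)^2 := by ring
    have hC : (t * d)^2 ≤ d^2 := by
      have h1 : t * d ≤ d := by nlinarith
      exact pow_le_pow_left₀ (mul_nonneg ht0 hdpos.le) h1 2
    have hB : (E1 * E2)^2 ≤ 1 + 0.437 * τ := by rw [hEsq]; exact hexp2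
    have hD : (E1 * E2)^2 * (t * d)^2 ≤ (1 + 0.437 * τ) * (t * d)^2 :=
      mul_le_mul_of_nonneg_right hB (sq_nonneg _)
    have hE : (1 + 0.437 * τ) * (t * d)^2 ≤ (t * d)^2 + 0.437 * τ * d^2 := by
      nlinarith [mul_nonneg hτ0 (sub_nonneg.2 hC)]
    have hF : (t * d)^2 + 0.437 * τ * d^2 ≤ (t * d)^2 + τ * β^2 := by
      nlinarith [mul_le_mul_of_nonneg_left hβd hτ0]
    linarith [hG2]
  have hEd_nn : 0 ≤ E1 * E2 * (t * d) :=
    mul_nonneg (mul_nonneg hE1pos.le hE2pos.le) (mul_nonneg ht0 hdpos.le)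
  have hkey' : E1 * E2 * (t * d) ≤ G := by
    have h := Real.sqrt_le_sqrt hkey
    rwa [Real.sqrt_sq hEd_nn, Real.sqrt_sq hGnn] at h
  have hfin : E1 * (t * d) ≤ Y := by
    have h1 : E2 * (E1 * (t * d)) ≤ E2 * Y := by
      calc E2 * (E1 * (t * d)) = E1 * E2 * (t * d) := by ring
        _ ≤ G := hkey'
        _ ≤ E2 * Y := hGle
    exact le_of_mul_le_mul_left h1 hE2pos
  exact le_trans hXle hfin

end Helpers

set_option maxHeartbeats 2000000 in
theorem stmt13 {n : ℕ} (Ω : Set (EuclideanSpace ℝ (Fin n)))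
    (hΩc : IsCompact Ω) (hΩconv : Convex ℝ Ω)
    (M : EuclideanSpace ℝ (Fin n) → Matrix (Fin n) (Fin n) ℝ)
    (hMc1 : ContDiffOn ℝ 1 M Ω) (hMpd : ∀ p ∈ Ω, (M p).PosDef)
    (V : Set (EuclideanSpace ℝ (Fin n))) (hVfin : V.Finite) (hVsub : V ⊆ Ω)
    (ε σ1 : ℝ) (hσ1 : IsLUB (sigma1Set Ω M) σ1)
    (hcover : ∀ p ∈ Ω, ∃ v ∈ V, ‖mav (M p) (p - v)‖ ≤ ε)
    (hpack : ∀ v ∈ V, ∀ w ∈ V, v ≠ w →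
      ε ≤ ‖mav (M v) (v - w)‖ ∨ ε ≤ ‖mav (M w) (w - v)‖)
    (hcond : σ1 * ε ≤ 0.0584) :
    ∀ v ∈ V, ∀ p ∈ vorRegion Ω V (fun a b => ‖mav (M a) (a - b)‖) v,
      v ∈ connectedComponentIn (vorRegion Ω V (fun a b => ‖mav (M a) (a - b)‖) v) p := by
  intro v hv p hp
  have hpΩ : p ∈ Ω := hp.1
  have hpmin : ∀ w ∈ V, ‖mav (M p) (p - v)‖ ≤ ‖mav (M p) (p - w)‖ := hp.2
  by_cases hpv : p = v
  · rw [hpv] at hp ⊢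
    exact mem_connectedComponentIn hp
  have hpvne : p - v ≠ 0 := sub_ne_zero.2 hpv
  have hub : σ1 ∈ upperBounds (sigma1Set Ω M) := hσ1.1
  have hσnn : 0 ≤ σ1 := by
    have hmem : rho ((fderivWithin ℝ M Ω p (‖p - v‖⁻¹ • (p - v))) * (M p)⁻¹) /
        ‖mav (M p) (‖p - v‖⁻¹ • (p - v))‖ ∈ sigma1Set Ω M :=
      ⟨p, hpΩ, _, norm_smul_inv_norm hpvne, rfl⟩
    exact le_trans (div_nonneg (rho_nonneg _) (norm_nonneg _)) (hub hmem)
  set d : ℝ := ‖mav (M p) (p - v)‖ with hd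
  have hdpos : 0 < d := mav_norm_pos (hMpd p hpΩ) hpvne
  obtain ⟨u0, hu0V, hu0⟩ := hcover p hpΩ
  have hdε : d ≤ ε := le_trans (hpmin u0 hu0V) hu0
  have hεpos : 0 < ε := lt_of_lt_of_le hdpos hdε
  have hsd : σ1 * d ≤ 0.0584 := le_trans (mul_le_mul_of_nonneg_left hdε hσnn) hcond
  have hseg : segment ℝ v p ⊆ vorRegion Ω V (fun a b => ‖mav (M a) (a - b)‖) v := by
    intro q' hq'
    rw [segment_eq_image] at hq'
    obtain ⟨t, ht, rfl⟩ := hq'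
    have ht0 : (0:ℝ) ≤ t := ht.1
    have ht1 : t ≤ 1 := ht.2
    set q : EuclideanSpace ℝ (Fin n) := (1 - t) • v + t • p with hqdef
    set τ : ℝ := 1 - t with hτdef
    have hτ0 : 0 ≤ τ := by rw [hτdef]; linarith
    have hτ1 : τ ≤ 1 := by rw [hτdef]; linarith
    have hqΩ : q ∈ Ω := hΩconv (hVsub hv) hpΩ (by linarith) ht0 (by ring)
    show q ∈ vorRegion Ω V (fun a b => ‖mav (M a) (a - b)‖) v
    refine ⟨hqΩ, ?_⟩
    intro w hw
    show ‖mav (M q) (q - v)‖ ≤ ‖mav (M q) (q - w)‖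
    by_cases hwv : w = v
    · rw [hwv]
    -- vector identities
    have hqv : q - v = t • (p - v) := by
      rw [hqdef, sub_smul, one_smul, smul_sub]; abel
    have hpq : p - q = τ • (p - v) := by
      rw [hqdef, hτdef, sub_smul, one_smul, sub_smul, one_smul, smul_sub]; abel
    have hqp : q - p = -(τ • (p - v)) := by rw [← hpq]; abel
    have hqw : q - w = (p - w) - τ • (p - v) := by rw [← hpq]; abel
    have hvwv : v - w = (p - w) - (p - v) := by abel
    -- norms under M p
    have hAqv : ‖mav (M p) (q - v)‖ = t * d := by
      rw [hqv, mav_smul, norm_smul, Real.norm_eq_abs, abs_of_nonneg ht0, hd]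
    have hApq : ‖mav (M p) (p - q)‖ = τ * d := by
      rw [hpq, mav_smul, norm_smul, Real.norm_eq_abs, abs_of_nonneg hτ0, hd]
    have hAqp : ‖mav (M p) (q - p)‖ = τ * d := by
      rw [mav_norm_swap, hApq]
    have hτd_nn : 0 ≤ σ1 * (τ * d) := mul_nonneg hσnn (mul_nonneg hτ0 hdpos.le)
    have hτd_small : σ1 * (τ * d) ≤ 0.0584 := by nlinarith
    -- L1 from p to q
    set E1 : ℝ := Real.exp (1.25 * (σ1 * (τ * d))) with hE1def
    have hE1pos : 0 < E1 := Real.exp_pos _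
    have hL1pq : ∀ x, ‖mav (M q) x‖ ≤ E1 * ‖mav (M p) x‖ := by
      intro x
      have h := lemA hub hσnn hMc1 hΩconv hMpd hpΩ hqΩ
        (by rw [hAqp]; linarith) x
      rwa [hAqp] at h
    have hE1le : E1 ≤ 1.0788 := by
      have harg : 1.25 * (σ1 * (τ * d)) ≤ 0.073 := by nlinarith
      have h1 := Real.exp_le_exp.2 harg
      have h2 : Real.exp (0.073:ℝ) ≤ 1 / (1 - 0.073) := exp_le_one_div (by norm_num) (by norm_num)
      have h3 : (1:ℝ) / (1 - 0.073) ≤ 1.0788 := by norm_num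
      rw [hE1def]
      linarith
    -- reverse distance
    set Dqp : ℝ := ‖mav (M q) (p - q)‖ with hDqpdef
    have hDqp_nn : 0 ≤ Dqp := norm_nonneg _
    have hDqp : Dqp ≤ E1 * (τ * d) := by
      have h := hL1pq (p - q)
      rw [hApq, ← hDqpdef] at h
      exact h
    have hsDqp_nn : 0 ≤ σ1 * Dqp := mul_nonneg hσnn hDqp_nn
    have hsDqp : σ1 * Dqp ≤ 0.15 := by nlinarith
    -- L1 from q to p
    set E2 : ℝ := Real.exp (1.25 * (σ1 * Dqp)) with hE2def
    have hE2pos : 0 < E2 := Real.exp_pos _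
    have hL1qp : ∀ z, ‖mav (M p) z‖ ≤ E2 * ‖mav (M q) z‖ := by
      intro z
      exact lemA hub hσnn hMc1 hΩconv hMpd hqΩ hpΩ hsDqp z
    -- geometry
    set β : ℝ := ‖mav (M p) (v - w)‖ with hβdef
    set σb : ℝ := ‖mav (M p) (p - w)‖ with hσbdef
    set G : ℝ := ‖mav (M p) (q - w)‖ with hGdef
    have hσbd : d ≤ σb := hpmin w hw
    have hG2 : (t * d)^2 + τ * β^2 ≤ G^2 := by
      have hGvec : mav (M p) (q - w) = mav (M p) (p - w) - τ • mav (M p) (p - v) := by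
        rw [hqw, mav_sub, mav_smul]
      have hβvec : mav (M p) (v - w) = mav (M p) (p - w) - mav (M p) (p - v) := by
        rw [hvwv, mav_sub]
      have h1 : G^2 = σb^2 - 2 * (τ * inner ℝ (mav (M p) (p - w)) (mav (M p) (p - v))) +
          τ^2 * d^2 := by
        rw [hGdef, hGvec, norm_sub_sq_real, real_inner_smul_right, norm_smul,
          Real.norm_eq_abs, abs_of_nonneg hτ0, ← hσbdef, ← hd]
        ring
      have h2 : β^2 = σb^2 - 2 * inner ℝ (mav (M p) (p - w)) (mav (M p) (p - v)) + d^2 := by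
        rw [hβdef, hβvec, norm_sub_sq_real, ← hσbdef, ← hd]
      have h2τ : τ * β^2 = τ * σb^2 -
          2 * (τ * inner ℝ (mav (M p) (p - w)) (mav (M p) (p - v))) + τ * d^2 := by
        rw [h2]; ring
      have hsq : d^2 ≤ σb^2 := by nlinarith
      have hint : 0 ≤ t * (σb^2 - d^2) := mul_nonneg ht0 (by linarith)
      have htτ : t = 1 - τ := by rw [hτdef]; ring
      rw [htτ] at hint ⊢
      nlinarith [h1, h2τ, hint]
    -- packing lower bound on β
    have hβε : 0.85 * ε ≤ β := by
      have hvpnorm : ‖mav (M p) (v - p)‖ = d := by rw [mav_norm_swap, hd]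
      rcases hpack v hv w hw (fun h => hwv h.symm) with hc1 | hc2
      · have h := lemA hub hσnn hMc1 hΩconv hMpd hpΩ (hVsub hv)
          (by rw [hvpnorm]; linarith) (v - w)
        rw [hvpnorm, ← hβdef] at h
        have hE3 : Real.exp (1.25 * (σ1 * d)) ≤ 1.0788 := by
          have harg : 1.25 * (σ1 * d) ≤ 0.073 := by nlinarith
          have h2 : Real.exp (0.073:ℝ) ≤ 1 / (1 - 0.073) :=
            exp_le_one_div (by norm_num) (by norm_num)
          have h3 : (1:ℝ) / (1 - 0.073) ≤ 1.0788 := by norm_num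
          have h1 := Real.exp_le_exp.2 harg
          linarith
        have hβnn : 0 ≤ β := norm_nonneg _
        nlinarith [hc1, h, Real.exp_pos (1.25 * (σ1 * d))]
      · by_cases hβcase : 0.85 * ε ≤ β
        · exact hβcase
        push_neg at hβcase
        exfalso
        have hwpnorm : ‖mav (M p) (w - p)‖ = σb := by rw [mav_norm_swap, hσbdef]
        have hσbtri : σb ≤ d + β := by
          have hsplit : (p : EuclideanSpace ℝ (Fin n)) - w = (p - v) + (v - w) := by abel
          rw [hσbdef, hsplit, mav_add]
          exact norm_add_le _ _
        have hsσb_nn : 0 ≤ σ1 * σb := mul_nonneg hσnn (norm_nonneg _)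
        have hsσb : σ1 * σb ≤ 0.10804 := by nlinarith
        have h := lemA hub hσnn hMc1 hΩconv hMpd hpΩ (hVsub hw)
          (by rw [hwpnorm]; linarith) (w - v)
        rw [hwpnorm] at h
        have hwvnorm : ‖mav (M p) (w - v)‖ = β := by rw [mav_norm_swap, ← hβdef]
        rw [hwvnorm] at h
        have hE4 : Real.exp (1.25 * (σ1 * σb)) ≤ 1.1562 := by
          have harg : 1.25 * (σ1 * σb) ≤ 0.13505 := by nlinarith
          have h2 : Real.exp (0.13505:ℝ) ≤ 1 / (1 - 0.13505) :=
            exp_le_one_div (by norm_num) (by norm_num)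
          have h3 : (1:ℝ) / (1 - 0.13505) ≤ 1.1562 := by norm_num
          have h1 := Real.exp_le_exp.2 harg
          linarith
        have hβnn : 0 ≤ β := norm_nonneg _
        nlinarith [hc2, h, Real.exp_pos (1.25 * (σ1 * σb))]
    -- final comparison
    set X : ℝ := ‖mav (M q) (q - v)‖ with hXdef
    set Y : ℝ := ‖mav (M q) (q - w)‖ with hYdef
    have hXle : X ≤ E1 * (t * d) := by
      have h := hL1pq (q - v)
      rw [hAqv, ← hXdef] at h
      exact h
    have hGle : G ≤ E2 * Y := by
      have h := hL1qp (q - w)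
      rw [← hGdef, ← hYdef] at h
      exact h
    exact endgame ht0 ht1 hτdef hdpos hdε hσnn hsd hE1def hDqp_nn hDqp hE2def hG2
      hβε (norm_nonneg _) (norm_nonneg _) hXle hGle
  exact (convex_segment v p).isPreconnected.subset_connectedComponentIn
    (right_mem_segment ℝ v p) hseg (left_mem_segment ℝ v p)
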